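/- Let {ψ_n}_{n=0}^∞ be the orthonormal basis of L²(0,1) obtained by applying the Gram–Schmidt orthonormalization procedure to the sequence of functions {sⁿe^s}_{n=0}^∞ (in order n = 0, 1, 2, ...). Define a_{mn} = ⟨ψ_n', ψ_m⟩ (the L²(0,1) inner product of the derivative of ψ_n with ψ_m). Then a_{nn} = 1 for all n, and a_{mn} = 0 whenever n < m. -/

import Mathlib

open MeasureTheory Real intervalIntegral

private lemma contPE (ψ : ℕ → ℝ → ℝ) (hψC1 : ∀ n, ContDiff ℝ 1 (ψ n)) (j m : ℕ) :
    IntervalIntegrable (fun s : ℝ => s ^ j * Real.exp s * ψ m s) volume 0 1 := by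
  apply Continuous.intervalIntegrable
  exact ((continuous_pow j).mul Real.continuous_exp).mul (hψC1 m).continuous

/-- Expanding `ψ n` via its polynomial form inside the inner product. -/
private lemma expandInner (ψ : ℕ → ℝ → ℝ) (hψC1 : ∀ n, ContDiff ℝ 1 (ψ n))
    (n m : ℕ) (c : Fin (n + 1) → ℝ)
    (hψ : ∀ s : ℝ, ψ n s = ∑ k : Fin (n + 1), c k * s ^ (k : ℕ) * Real.exp s) :
    (∫ s in (0:ℝ)..1, ψ n s * ψ m s)
      = ∑ j : Fin (n + 1), c j * ∫ s in (0:ℝ)..1, s ^ (j:ℕ) * Real.exp s * ψ m s := by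
  have h1 : (∫ s in (0:ℝ)..1, ψ n s * ψ m s)
      = ∫ s in (0:ℝ)..1, ∑ j : Fin (n + 1), c j * (s ^ (j:ℕ) * Real.exp s * ψ m s) := by
    apply intervalIntegral.integral_congr
    intro s _
    dsimp only
    rw [hψ s, Finset.sum_mul]
    exact Finset.sum_congr rfl fun j _ => by ring
  have h2 := intervalIntegral.integral_finset_sum (μ := volume) (a := (0:ℝ)) (b := 1) (s := Finset.univ)
    (f := fun (j : Fin (n+1)) (s : ℝ) => c j * (s ^ (j:ℕ) * Real.exp s * ψ m s))

    (fun j _ => (contPE ψ hψC1 (j:ℕ) m).const_mul (c j))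
  rw [h1, h2]
  exact Finset.sum_congr rfl fun j _ => intervalIntegral.integral_const_mul _ _

/-- `sᵏ eˢ` is orthogonal to `ψ m` for `k < m`. -/
private lemma polyExpOrth (ψ : ℕ → ℝ → ℝ) (hψC1 : ∀ n, ContDiff ℝ 1 (ψ n))
    (horth : ∀ m n : ℕ, (∫ s in (0:ℝ)..1, ψ m s * ψ n s) = if m = n then 1 else 0)
    (hform : ∀ n : ℕ, ∃ c : Fin (n + 1) → ℝ,
      c ⟨n, Nat.lt_succ_self n⟩ ≠ 0 ∧
      ∀ s : ℝ, ψ n s = ∑ k : Fin (n + 1), c k * s ^ (k : ℕ) * Real.exp s) :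
    ∀ k m : ℕ, k < m → (∫ s in (0:ℝ)..1, s ^ k * Real.exp s * ψ m s) = 0 := by
  intro k
  induction k using Nat.strong_induction_on with
  | _ k ih =>
    intro m hkm
    obtain ⟨c, hc, hψ⟩ := hform k
    have key := expandInner ψ hψC1 k m c hψ
    rw [horth k m, if_neg (Nat.ne_of_lt hkm)] at key
    rw [Fin.sum_univ_castSucc] at key
    simp only [Fin.coe_castSucc, Fin.val_last] at key
    have hz : ∀ j : Fin k,
        c j.castSucc * (∫ s in (0:ℝ)..1, s ^ (j : ℕ) * Real.exp s * ψ m s) = 0 := by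
      intro j
      rw [ih j j.isLt m (lt_trans j.isLt hkm)]
      ring
    rw [Finset.sum_eq_zero (fun j _ => hz j), zero_add] at key
    have hc' : c (Fin.last k) ≠ 0 := hc
    exact (mul_eq_zero.mp key.symm).resolve_left hc'

private lemma mainCalc (ψ : ℕ → ℝ → ℝ) (hψC1 : ∀ n, ContDiff ℝ 1 (ψ n))
    (horth : ∀ m n : ℕ, (∫ s in (0:ℝ)..1, ψ m s * ψ n s) = if m = n then 1 else 0)
    (hform : ∀ n : ℕ, ∃ c : Fin (n + 1) → ℝ,
      c ⟨n, Nat.lt_succ_self n⟩ ≠ 0 ∧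
      ∀ s : ℝ, ψ n s = ∑ k : Fin (n + 1), c k * s ^ (k : ℕ) * Real.exp s)
    (n m : ℕ) (hnm : n ≤ m) :
    (∫ s in (0:ℝ)..1, deriv (ψ n) s * ψ m s) = if n = m then 1 else 0 := by
  obtain ⟨c, hc, hψ⟩ := hform n
  have hd : ∀ s : ℝ, HasDerivAt (ψ n)
      (∑ j : Fin (n+1), (c j * ((j:ℕ) * s ^ ((j:ℕ)-1)) * Real.exp s
        + c j * s ^ (j:ℕ) * Real.exp s)) s := by
    intro s
    have heq : ψ n = fun s => ∑ j : Fin (n+1), c j * s ^ (j:ℕ) * Real.exp s := funext hψ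
    rw [heq]
    apply HasDerivAt.fun_sum
    intro j _
    have h1 := ((hasDerivAt_pow (j:ℕ) s).const_mul (c j)).mul (Real.hasDerivAt_exp s)
    exact h1
  have step1 : (∫ s in (0:ℝ)..1, deriv (ψ n) s * ψ m s)
      = ∫ s in (0:ℝ)..1, ∑ j : Fin (n+1),
          (c j * (j:ℕ) * (s ^ ((j:ℕ)-1) * Real.exp s * ψ m s)
            + c j * (s ^ (j:ℕ) * Real.exp s * ψ m s)) := by
    apply intervalIntegral.integral_congr
    intro s _
    dsimp only
    rw [(hd s).deriv, Finset.sum_mul]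
    exact Finset.sum_congr rfl fun j _ => by ring
  have h2 := intervalIntegral.integral_finset_sum (μ := volume) (a := (0:ℝ)) (b := 1) (s := Finset.univ)
    (f := fun (j : Fin (n+1)) (s : ℝ) =>
      c j * (j:ℕ) * (s ^ ((j:ℕ)-1) * Real.exp s * ψ m s)
        + c j * (s ^ (j:ℕ) * Real.exp s * ψ m s))

    (fun j _ => (((contPE ψ hψC1 _ m).const_mul _).add ((contPE ψ hψC1 _ m).const_mul _)))
  rw [step1, h2]
  have step2 : ∀ j : Fin (n+1),
      (∫ s in (0:ℝ)..1, (c j * (j:ℕ) * (s ^ ((j:ℕ)-1) * Real.exp s * ψ m s)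
        + c j * (s ^ (j:ℕ) * Real.exp s * ψ m s)))
      = c j * (j:ℕ) * (∫ s in (0:ℝ)..1, s ^ ((j:ℕ)-1) * Real.exp s * ψ m s)
        + c j * ∫ s in (0:ℝ)..1, s ^ (j:ℕ) * Real.exp s * ψ m s := by
    intro j
    rw [intervalIntegral.integral_add ((contPE ψ hψC1 _ m).const_mul _)
      ((contPE ψ hψC1 _ m).const_mul _),
      intervalIntegral.integral_const_mul, intervalIntegral.integral_const_mul]
  rw [Finset.sum_congr rfl (fun j _ => step2 j), Finset.sum_add_distrib]
  have hz1 : ∀ j : Fin (n+1),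
      c j * (j:ℕ) * (∫ s in (0:ℝ)..1, s ^ ((j:ℕ)-1) * Real.exp s * ψ m s) = 0 := by
    intro j
    rcases Nat.eq_zero_or_pos (j:ℕ) with h | h
    · rw [h]; simp
    · rw [polyExpOrth ψ hψC1 horth hform ((j:ℕ)-1) m
        (lt_of_lt_of_le (lt_of_lt_of_le (Nat.sub_lt h one_pos)
          (Nat.le_of_lt_succ j.isLt)) hnm)]
      ring
  rw [Finset.sum_eq_zero (fun j _ => hz1 j), zero_add,
    ← expandInner ψ hψC1 n m c hψ, horth n m]

/-- Let `ψ n` be the orthonormal basis of `L²(0,1)` obtained by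
Gram–Schmidt orthonormalization of the sequence `s ↦ sⁿ eˢ` (so each `ψ n` is of the
form `Pₙ(s) eˢ` with `Pₙ` a polynomial of degree exactly `n`, and the family is
orthonormal).  With `a m n = ⟨ψₙ', ψₘ⟩` the `L²(0,1)` inner product of the derivative
of `ψ n` with `ψ m`, we have `a n n = 1` for all `n`, and `a m n = 0` whenever `n < m`. -/
theorem gramSchmidt_deriv_inner_upper_triangular
    (ψ : ℕ → ℝ → ℝ)
    (hψC1 : ∀ n, ContDiff ℝ 1 (ψ n))
    (horth : ∀ m n : ℕ, (∫ s in (0:ℝ)..1, ψ m s * ψ n s) = if m = n then 1 else 0)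
    (hform : ∀ n : ℕ, ∃ c : Fin (n + 1) → ℝ,
      c ⟨n, Nat.lt_succ_self n⟩ ≠ 0 ∧
      ∀ s : ℝ, ψ n s = ∑ k : Fin (n + 1), c k * s ^ (k : ℕ) * Real.exp s) :
    (∀ n : ℕ, (∫ s in (0:ℝ)..1, deriv (ψ n) s * ψ n s) = 1) ∧
    (∀ m n : ℕ, n < m → (∫ s in (0:ℝ)..1, deriv (ψ n) s * ψ m s) = 0) := by
  constructor
  · intro n
    rw [mainCalc ψ hψC1 horth hform n n le_rfl, if_pos rfl]
  · intro m n hnm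
    rw [mainCalc ψ hψC1 horth hform n m hnm.le, if_neg (Nat.ne_of_lt hnm)]
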